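/- Let a be an integer, α a real number with 0 < α < 1, and y : ℤ → ℝ. For each ω > 0 let z(ω, ·) : ℤ → ℝ satisfy z(ω, a) = 0 and z(ω, k) − z(ω, k−1) = −ω z(ω, k) + (y(k) − y(k−1)) for every integer k ≥ a+1. Then for every integer k ≥ a+1, the function ω ↦ μ_{1−α}(ω) z(ω, k) is integrable on (0, +∞) and the Caputo fractional difference satisfies {}_a∇_k^{α} y(k) = ∫_0^{+∞} μ_{1−α}(ω) z(ω, k) dω. -/

import Mathlib

open MeasureTheory Set Real



/-- The `α`-th nabla fractional sum of `u : ℤ → ℝ` with initial instant `a`: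
`{}_a∇_k^{-α} u(k) = ∑_{i=0}^{k-a-1} (Γ(α+i)/(Γ(α) Γ(i+1))) u(k−i)`. -/
noncomputable def nablaFracSum (a : ℤ) (α : ℝ) (u : ℤ → ℝ) (k : ℤ) : ℝ :=
  ∑ i ∈ Finset.range (k - a).toNat,
    Real.Gamma (α + i) / (Real.Gamma α * Real.Gamma (i + 1)) * u (k - i)

/-- The nabla Caputo fractional difference of order `0 < α < 1`:
`{}_a∇_k^{α} y(k) = {}_a∇_k^{-(1−α)} (∇y)(k)`, where `∇y(k) = y(k) − y(k−1)`. -/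
noncomputable def nablaCaputoDiff (a : ℤ) (α : ℝ) (y : ℤ → ℝ) (k : ℤ) : ℝ :=
  nablaFracSum a (1 - α) (fun j => y j - y (j - 1)) k

/-- **Frequency distributed model of the Caputo fractional difference.**
If for each `ω > 0`, `z(ω,·)` satisfies `z(ω,a) = 0` and
`z(ω,k) − z(ω,k−1) = −ω z(ω,k) + ∇y(k)` for `k ≥ a+1`, then for every `k ≥ a+1` the
function `ω ↦ μ_{1−α}(ω) z(ω,k)` is integrable on `(0,∞)` and
`{}_a∇_k^{α} y(k) = ∫_0^∞ μ_{1−α}(ω) z(ω,k) dω`, where `μ_β(ω) = sin(βπ)/(π ω^β)`. -/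
lemma realBeta (p q : ℝ) (hp : 0 < p) (hq : 0 < q) :
    IntegrableOn (fun t : ℝ => t ^ (p - 1) * (1 - t) ^ (q - 1)) (Ioo (0:ℝ) 1) ∧
    ∫ t in Ioo (0:ℝ) 1, t ^ (p - 1) * (1 - t) ^ (q - 1)
      = Real.Gamma p * Real.Gamma q / Real.Gamma (p + q) := by
  have hc : ∀ t ∈ Ioo (0:ℝ) 1,
      ((t:ℂ) ^ ((p:ℂ) - 1) * ((1:ℂ) - t) ^ ((q:ℂ) - 1))
        = ((t ^ (p - 1) * (1 - t) ^ (q - 1) : ℝ) : ℂ) := by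
    intro t ht
    rw [show ((1:ℂ) - (t:ℂ)) = ((1 - t : ℝ) : ℂ) by push_cast; ring,
      show ((p:ℂ) - 1) = ((p - 1 : ℝ) : ℂ) by push_cast; ring,
      show ((q:ℂ) - 1) = ((q - 1 : ℝ) : ℂ) by push_cast; ring,
      ← Complex.ofReal_cpow ht.1.le, ← Complex.ofReal_cpow (by linarith [ht.2] : (0:ℝ) ≤ 1 - t)]
    push_cast
    ring
  have hconv := Complex.betaIntegral_convergent (u := (p:ℂ)) (v := (q:ℂ))
    (by simpa using hp) (by simpa using hq)
  have hIoc : IntegrableOn (fun t : ℝ => (t:ℂ) ^ ((p:ℂ) - 1) * ((1:ℂ) - t) ^ ((q:ℂ) - 1))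
      (Ioo (0:ℝ) 1) := (hconv.1).mono_set Ioo_subset_Ioc_self
  have hint : IntegrableOn (fun t : ℝ => t ^ (p - 1) * (1 - t) ^ (q - 1)) (Ioo (0:ℝ) 1) := by
    have h2 := (hIoc.congr_fun hc measurableSet_Ioo).re
    simp at h2
    exact h2
  refine ⟨hint, ?_⟩
  have hβ := Complex.Gamma_mul_Gamma_eq_betaIntegral (s := (p:ℂ)) (t := (q:ℂ))
    (by simpa using hp) (by simpa using hq)
  have hval : Complex.betaIntegral p q = ((∫ t in Ioo (0:ℝ) 1, t ^ (p - 1) * (1 - t) ^ (q - 1) : ℝ) : ℂ) := by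
    rw [Complex.betaIntegral, intervalIntegral.integral_of_le zero_le_one,
      MeasureTheory.integral_Ioc_eq_integral_Ioo,
      setIntegral_congr_fun measurableSet_Ioo hc]
    exact integral_ofReal (𝕜 := ℂ)
  rw [hval] at hβ
  have hΓ : (0:ℝ) < Real.Gamma (p + q) := Real.Gamma_pos_of_pos (by linarith)
  have hβ' : (Real.Gamma p * Real.Gamma q : ℝ) =
      Real.Gamma (p + q) * (∫ t in Ioo (0:ℝ) 1, t ^ (p - 1) * (1 - t) ^ (q - 1)) := by
    rw [show ((p:ℂ) + q) = ((p + q : ℝ) : ℂ) by push_cast; ring] at hβ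
    rw [Complex.Gamma_ofReal, Complex.Gamma_ofReal, Complex.Gamma_ofReal] at hβ
    exact_mod_cast hβ
  field_simp
  linarith [hβ']


lemma cov (g : ℝ → ℝ) :
    (IntegrableOn g (Ioi (0:ℝ)) ↔
      IntegrableOn (fun t : ℝ => |((1 - t)^2)⁻¹| • g (t / (1 - t))) (Ioo (0:ℝ) 1)) ∧
    ∫ ω in Ioi (0:ℝ), g ω = ∫ t in Ioo (0:ℝ) 1, |((1 - t)^2)⁻¹| • g (t / (1 - t)) := by
  have hderiv : ∀ t ∈ Ioo (0:ℝ) 1,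
      HasDerivWithinAt (fun t : ℝ => t / (1 - t)) (((1 - t)^2)⁻¹) (Ioo (0:ℝ) 1) t := by
    intro t ht
    have h1 : (1:ℝ) - t ≠ 0 := by have := ht.2; intro h; nlinarith [ht.2]
    have h2 := ((hasDerivAt_id t).div ((hasDerivAt_id t).const_sub 1) h1).hasDerivWithinAt
      (s := Ioo (0:ℝ) 1)
    have e : ((1 - t)^2)⁻¹ = (1 * (1 - t) - t * -1) / (1 - t) ^ 2 := by ring
    rw [e]
    exact h2
  have hinj : InjOn (fun t : ℝ => t / (1 - t)) (Ioo (0:ℝ) 1) := by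
    intro t1 h1 t2 h2 h
    have d1 : (1:ℝ) - t1 ≠ 0 := by intro h; nlinarith [h1.2]
    have d2 : (1:ℝ) - t2 ≠ 0 := by intro h; nlinarith [h2.2]
    field_simp at h
    nlinarith [h]
  have himg : (fun t : ℝ => t / (1 - t)) '' Ioo (0:ℝ) 1 = Ioi (0:ℝ) := by
    ext ω
    constructor
    · rintro ⟨t, ht, rfl⟩
      exact div_pos ht.1 (by linarith [ht.2])
    · intro hω
      have hω' : (0:ℝ) < ω := hω
      refine ⟨ω / (1 + ω), ⟨div_pos hω' (by linarith), ?_⟩, ?_⟩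
      · rw [div_lt_one (by linarith)]; linarith
      · have h1 : (1:ℝ) + ω ≠ 0 := by positivity
        field_simp
        ring
  constructor
  · rw [← himg]
    exact integrableOn_image_iff_integrableOn_abs_deriv_smul measurableSet_Ioo hderiv hinj g
  · rw [← himg]
    exact integral_image_eq_integral_abs_deriv_smul measurableSet_Ioo hderiv hinj g


lemma keyInt (α : ℝ) (hα0 : 0 < α) (hα1 : α < 1) (i : ℕ) :
    IntegrableOn (fun ω : ℝ => ω ^ (α - 1) * (((1 + ω) ^ (i + 1))⁻¹)) (Ioi (0:ℝ)) ∧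
    ∫ ω in Ioi (0:ℝ), ω ^ (α - 1) * (((1 + ω) ^ (i + 1))⁻¹)
      = Real.Gamma α * Real.Gamma (i + 1 - α) / Real.Gamma (i + 1) := by
  set g : ℝ → ℝ := fun ω => ω ^ (α - 1) * (((1 + ω) ^ (i + 1))⁻¹) with hg
  have hq : (0:ℝ) < i + 1 - α := by
    have : (0:ℝ) ≤ i := Nat.cast_nonneg i
    linarith
  have hpt : ∀ t ∈ Ioo (0:ℝ) 1,
      |((1 - t)^2)⁻¹| • g (t / (1 - t)) = t ^ (α - 1) * (1 - t) ^ ((i + 1 - α : ℝ) - 1) := by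
    intro t ht
    obtain ⟨ht0, ht1⟩ := ht
    have hu : (0:ℝ) < 1 - t := by linarith
    have h1 : 1 + t / (1 - t) = (1 - t)⁻¹ := by field_simp; ring
    have h2 : (t / (1 - t)) ^ (α - 1) = t ^ (α - 1) / (1 - t) ^ (α - 1) :=
      Real.div_rpow ht0.le hu.le _
    rw [smul_eq_mul, hg]
    simp only [h1, h2]
    have h3 : (((1 - t) ^ 2 : ℝ))⁻¹ = (1 - t) ^ (-2 : ℝ) := by
      rw [← Real.rpow_natCast (1 - t) 2, ← Real.rpow_neg hu.le]; norm_num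
    have h4 : ((((1 - t))⁻¹) ^ (i + 1))⁻¹ = (1 - t) ^ (((i:ℝ) + 1)) := by
      rw [← inv_pow, inv_inv, ← Real.rpow_natCast (1 - t) (i + 1)]; push_cast; ring_nf
    have h5 : t ^ (α - 1) / (1 - t) ^ (α - 1) = t ^ (α - 1) * (1 - t) ^ (-(α - 1)) := by
      rw [div_eq_mul_inv, ← Real.rpow_neg hu.le]
    rw [abs_of_pos (by positivity), h3, h4, h5]
    rw [show (1 - t) ^ (-2:ℝ) * (t ^ (α - 1) * (1 - t) ^ (-(α - 1)) * (1 - t) ^ ((i:ℝ) + 1))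
        = t ^ (α - 1) * ((1 - t) ^ (-2:ℝ) * (1 - t) ^ (-(α - 1)) * (1 - t) ^ ((i:ℝ) + 1)) by ring,
      ← Real.rpow_add hu, ← Real.rpow_add hu]
    congr 1
    ring
  obtain ⟨hBint, hBval⟩ := realBeta α (i + 1 - α) hα0 hq
  obtain ⟨hiff, hval⟩ := cov g
  constructor
  · rw [hiff]
    exact hBint.congr_fun (fun t ht => (hpt t ht).symm) measurableSet_Ioo
  · rw [hval, setIntegral_congr_fun measurableSet_Ioo hpt, hBval]
    norm_num


/-- Frequency distributed model. -/
theorem caputo_frequency_distributed_model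
    (a : ℤ) (α : ℝ) (hα0 : 0 < α) (hα1 : α < 1) (y : ℤ → ℝ)
    (z : ℝ → ℤ → ℝ)
    (hz0 : ∀ ω : ℝ, 0 < ω → z ω a = 0)
    (hz : ∀ ω : ℝ, 0 < ω → ∀ k : ℤ, a + 1 ≤ k →
      z ω k - z ω (k - 1) = -ω * z ω k + (y k - y (k - 1))) :
    ∀ k : ℤ, a + 1 ≤ k →
      MeasureTheory.IntegrableOn
        (fun ω : ℝ => Real.sin ((1 - α) * Real.pi) / (Real.pi * ω ^ (1 - α)) * z ω k)
        (Set.Ioi (0 : ℝ)) ∧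
      nablaCaputoDiff a α y k =
        ∫ ω in Set.Ioi (0 : ℝ),
          Real.sin ((1 - α) * Real.pi) / (Real.pi * ω ^ (1 - α)) * z ω k := by
  -- closed form for z
  have hzf : ∀ ω : ℝ, 0 < ω → ∀ m : ℕ,
      z ω (a + m) = ∑ i ∈ Finset.range m,
        (((1 + ω) ^ (i + 1))⁻¹) * (y (a + m - i) - y (a + m - i - 1)) := by
    intro ω hω m
    induction m with
    | zero => simpa using hz0 ω hω
    | succ m ih =>
      have h1ω : (1:ℝ) + ω ≠ 0 := by positivity
      have hrec := hz ω hω (a + (m + 1 : ℕ)) (by push_cast; omega)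
      have hstep : z ω (a + (m + 1 : ℕ)) =
          (1 + ω)⁻¹ * (z ω (a + m) + (y (a + (m+1:ℕ)) - y (a + (m+1:ℕ) - 1))) := by
        have hm : (a + (m + 1 : ℕ) - 1 : ℤ) = a + m := by push_cast; ring
        rw [hm] at hrec
        push_cast at hrec ⊢
        rw [show (a + ((m:ℤ) + 1) - 1 : ℤ) = a + (m:ℤ) by ring]
        field_simp
        linarith [hrec]
      rw [hstep, ih, Finset.sum_range_succ']
      rw [mul_add]
      congr 1
      · rw [Finset.mul_sum]
        apply Finset.sum_congr rfl
        intro i hi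
        have harg : (a + ((m:ℤ) + 1) - (i + 1) : ℤ) = a + m - i := by ring
        push_cast
        rw [harg]
        rw [show (((1 + ω) ^ (i + 1 + 1) : ℝ))⁻¹ = ((1 + ω) ^ (i + 1))⁻¹ * (1 + ω)⁻¹ by
          rw [pow_succ, mul_inv]]
        ring
      · push_cast
        norm_num
  intro k hk
  set n : ℕ := (k - a).toNat with hn
  have hkn : k = a + n := by
    have : (0:ℤ) ≤ k - a := by omega
    omega
  -- constants
  have hsin : Real.sin ((1 - α) * Real.pi) = Real.sin (Real.pi * α) := by
    rw [show (1 - α) * Real.pi = Real.pi - α * Real.pi by ring, Real.sin_pi_sub]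
    ring_nf
  have hsinpos : 0 < Real.sin (Real.pi * α) := by
    apply Real.sin_pos_of_pos_of_lt_pi
    · positivity
    · nlinarith [Real.pi_pos]
  have hΓα : 0 < Real.Gamma α := Real.Gamma_pos_of_pos hα0
  have hΓ1α : 0 < Real.Gamma (1 - α) := Real.Gamma_pos_of_pos (by linarith)
  have hrefl : Real.Gamma α * Real.Gamma (1 - α) = Real.pi / Real.sin (Real.pi * α) :=
    Real.Gamma_mul_Gamma_one_sub α
  -- the summand functions
  set C : ℝ := Real.sin ((1 - α) * Real.pi) / Real.pi with hC
  set d : ℕ → ℝ := fun i => y (k - i) - y (k - i - 1) with hd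
  set F : ℕ → ℝ → ℝ := fun i ω => (C * d i) * (ω ^ (α - 1) * (((1 + ω) ^ (i + 1))⁻¹)) with hF
  have hFint : ∀ i : ℕ, IntegrableOn (F i) (Ioi (0:ℝ)) := fun i =>
    ((keyInt α hα0 hα1 i).1).const_mul _
  have hFval : ∀ i : ℕ, ∫ ω in Ioi (0:ℝ), F i ω
      = Real.Gamma (1 - α + i) / (Real.Gamma (1 - α) * Real.Gamma (i + 1)) * d i := by
    intro i
    have hΓi : 0 < Real.Gamma ((i:ℝ) + 1) := Real.Gamma_pos_of_pos (by positivity)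
    rw [hF]
    rw [MeasureTheory.integral_const_mul, (keyInt α hα0 hα1 i).2]
    rw [hC, hsin]
    rw [show ((i:ℝ) + 1 - α) = 1 - α + i by ring]
    have hπ : Real.pi ≠ 0 := Real.pi_ne_zero
    have key : Real.sin (Real.pi * α) * (Real.Gamma α * Real.Gamma (1 - α)) = Real.pi := by
      rw [hrefl]; field_simp
    field_simp
    linear_combination (d i * Real.Gamma (1 - α + (i:ℝ))) * key
  -- pointwise identity of the integrand
  have hpt : ∀ ω ∈ Ioi (0:ℝ),
      Real.sin ((1 - α) * Real.pi) / (Real.pi * ω ^ (1 - α)) * z ω k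
        = ∑ i ∈ Finset.range n, F i ω := by
    intro ω hω
    have hω' : (0:ℝ) < ω := hω
    have hzz := hzf ω hω' n
    rw [← hkn] at hzz
    rw [hzz, Finset.mul_sum]
    apply Finset.sum_congr rfl
    intro i hi
    have hrp : ω ^ (1 - α) ≠ 0 := by positivity
    have hinv : (ω ^ (1 - α))⁻¹ = ω ^ (α - 1) := by
      rw [← Real.rpow_neg hω'.le]
      norm_num
    rw [hF, hC, hd]
    rw [div_mul_eq_mul_div, div_eq_mul_inv, mul_inv, hinv]
    ring
  have hmeas : MeasurableSet (Ioi (0:ℝ)) := measurableSet_Ioi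
  have hsumint : IntegrableOn (fun ω => ∑ i ∈ Finset.range n, F i ω) (Ioi (0:ℝ)) :=
    MeasureTheory.integrable_finset_sum _ (fun i _ => hFint i)
  constructor
  · exact hsumint.congr_fun (fun ω hω => (hpt ω hω).symm) hmeas
  · rw [setIntegral_congr_fun hmeas hpt,
      MeasureTheory.integral_finset_sum _ (fun i _ => hFint i)]
    unfold nablaCaputoDiff nablaFracSum
    rw [← hn]
    apply Finset.sum_congr rfl
    intro i hi
    rw [hFval i, hd]
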